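/- For any complex numbers x_1,…,x_{d+s} (d,s ∈ ℤ_{≥0}), one has 𝔉(x_1,…,x_d)𝔉(x_2,…,x_{d+s}) − 𝔉(x_1,…,x_{d+s})𝔉(x_2,…,x_d) = (∏_{j=1}^d x_j x_{j+1}) · 𝔉(x_{d+2},…,x_{d+s}). -/

import Mathlib

open scoped BigOperators

/-- Admissible index tuples: k₁ ≥ 1 and k_{i+1} ≥ k_i + 2. -/
def FAdm (m : ℕ) (k : Fin m → ℕ) : Prop :=
  (∀ i, 1 ≤ k i) ∧ ∀ i j : Fin m, (i : ℕ) + 1 = (j : ℕ) → k i + 2 ≤ k j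

/-- The function 𝔉 given by the alternating multiple series
`𝔉(x) = 1 + ∑_{m≥1} (-1)^m ∑_{k₁≥1, k_{i+1}≥k_i+2} x_{k₁}x_{k₁+1}⋯x_{k_m}x_{k_m+1}`;
the sequence is indexed so that `x k` is `x_k` for `k ≥ 1`. -/
noncomputable def Fcal (x : ℕ → ℂ) : ℂ :=
  ∑' p : (Σ m : ℕ, { k : Fin m → ℕ // FAdm m k }),
    (-1 : ℂ) ^ p.1 * ∏ i, x (p.2.1 i) * x (p.2.1 i + 1)

/-- 𝔉 of the finite sequence (x_1, …, x_n): x truncated after position n, padded by zeros. -/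
noncomputable def FcalFin (n : ℕ) (x : ℕ → ℂ) : ℂ :=
  Fcal fun k => if k ≤ n then x k else 0

/-- 𝔉 of the finite segment (x_a, …, x_b); it equals 1 when the segment is empty (b = a-1)
and, by convention, 0 when b = a-2 (a segment of "length -1"). -/
noncomputable def Fseg (x : ℕ → ℂ) (a b : ℕ) : ℂ :=
  if b + 1 < a then 0 else FcalFin (b + 1 - a) (fun j => x (j + a - 1))

/-! ### Auxiliary material -/

abbrev FIdx := Σ m : ℕ, { k : Fin m → ℕ // FAdm m k }

lemma fadm_mono {m : ℕ} {k : Fin m → ℕ} (hk : FAdm m k) :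
    ∀ (t : ℕ) (i j : Fin m), (i : ℕ) + t = (j : ℕ) → k i + 2 * t ≤ k j := by
  intro t
  induction t with
  | zero =>
    intro i j h
    have : i = j := Fin.ext (by omega)
    subst this; omega
  | succ t ih =>
    intro i j h
    have hj' : (i : ℕ) + t < m := by omega
    have h1 := ih i ⟨(i : ℕ) + t, hj'⟩ (by simp)
    have h2 := hk.2 ⟨(i : ℕ) + t, hj'⟩ j (by simp; omega)
    omega

lemma fadm_lb {m : ℕ} {k : Fin m → ℕ} (hk : FAdm m k) (i : Fin m) :
    2 * (i : ℕ) + 1 ≤ k i := by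
  have h0 : (0 : ℕ) < m := by have := i.isLt; omega
  have h1 := fadm_mono hk (i : ℕ) ⟨0, h0⟩ i (by simp)
  have h2 := hk.1 ⟨0, h0⟩
  omega

instance fadmDec (m : ℕ) : DecidablePred (FAdm m) := fun k =>
  decidable_of_iff ((∀ i, 1 ≤ k i) ∧ ∀ i j : Fin m, (i : ℕ) + 1 = (j : ℕ) → k i + 2 ≤ k j)
    Iff.rfl

def suppF (n : ℕ) : Finset FIdx :=
  (Finset.range (n + 1)).sigma fun m =>
    (Fintype.piFinset fun _ : Fin m => Finset.range (n + 1)).subtype (FAdm m)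

lemma mem_suppF {n : ℕ} {p : FIdx} : p ∈ suppF n ↔ p.1 ≤ n ∧ ∀ i, p.2.1 i ≤ n := by
  rcases p with ⟨m, k, hk⟩
  simp [suppF, Finset.mem_sigma, Finset.mem_subtype, Fintype.mem_piFinset, Nat.lt_succ_iff]

lemma summable_F (y : ℕ → ℂ) (n : ℕ) (hy : ∀ k, n < k → y k = 0) :
    Summable (fun p : FIdx => (-1 : ℂ) ^ p.1 * ∏ i, y (p.2.1 i) * y (p.2.1 i + 1)) := by
  apply summable_of_ne_finset_zero (s := suppF n)
  intro p hp
  rw [mem_suppF] at hp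
  have hex : ∃ i : Fin p.1, n < p.2.1 i := by
    rcases Nat.lt_or_ge n p.1 with h | h
    · have h0 : 0 < p.1 := by omega
      refine ⟨⟨p.1 - 1, by omega⟩, ?_⟩
      have := fadm_lb p.2.2 ⟨p.1 - 1, by omega⟩
      simp only [Fin.val_mk] at this
      omega
    · by_contra hcon
      push_neg at hcon
      exact hp ⟨h, fun i => by have := hcon i; omega⟩
  obtain ⟨i, hi⟩ := hex
  have : y (p.2.1 i) * y (p.2.1 i + 1) = 0 := by rw [hy _ hi, zero_mul]
  exact mul_eq_zero_of_right _ (Finset.prod_eq_zero (Finset.mem_univ i) this)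

def emb1 (p : FIdx) : FIdx :=
  ⟨p.1, ⟨fun i => p.2.1 i + 1,
    ⟨fun i => by show 1 ≤ p.2.1 i + 1; omega,
     fun i j h => by show p.2.1 i + 1 + 2 ≤ p.2.1 j + 1; have := p.2.2.2 i j h; omega⟩⟩⟩

def emb2 (p : FIdx) : FIdx :=
  ⟨p.1 + 1, ⟨Fin.cons 1 (fun i => p.2.1 i + 2), by
    constructor
    · intro i
      induction i using Fin.cases with
      | zero => simp
      | succ i' => simp [Fin.cons_succ]
    · intro i j
      induction j using Fin.cases with
      | zero => intro h; exact absurd h (by simp)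
      | succ j' =>
        induction i using Fin.cases with
        | zero =>
          intro _
          simp only [Fin.cons_zero, Fin.cons_succ]
          have := p.2.2.1 j'; omega
        | succ i' =>
          intro h
          simp only [Fin.cons_succ]
          have h' : (i' : ℕ) + 1 = (j' : ℕ) := by
            simp only [Fin.val_succ] at h; omega
          have := p.2.2.2 i' j' h'; omega⟩⟩

lemma fidx_ext {m : ℕ} {k k' : Fin m → ℕ} {h : FAdm m k} {h' : FAdm m k'}
    (hkk : ∀ i, k i = k' i) :
    (⟨m, ⟨k, h⟩⟩ : FIdx) = ⟨m, ⟨k', h'⟩⟩ := by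
  congr 1
  exact Subtype.ext (funext hkk)

lemma emb1_inj : Function.Injective emb1 := by
  rintro ⟨m, k, hk⟩ ⟨m', k', hk'⟩ h
  simp only [emb1] at h
  obtain ⟨h1, h2⟩ := Sigma.mk.inj_iff.mp h
  subst h1
  have h2 : (fun i : Fin m => k i + 1) = fun i => k' i + 1 := congrArg Subtype.val (eq_of_heq h2)
  refine fidx_ext fun i => ?_
  have := congrFun h2 i
  omega

lemma emb2_inj : Function.Injective emb2 := by
  rintro ⟨m, k, hk⟩ ⟨m', k', hk'⟩ h
  simp only [emb2] at h
  obtain ⟨h1, h2⟩ := Sigma.mk.inj_iff.mp h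
  have hm : m = m' := by omega
  subst hm
  have h2 : (Fin.cons 1 (fun i : Fin m => k i + 2) : Fin (m + 1) → ℕ)
      = Fin.cons 1 (fun i : Fin m => k' i + 2) := congrArg Subtype.val (eq_of_heq h2)
  refine fidx_ext fun i => ?_
  have := congrFun h2 i.succ
  simp only [Fin.cons_succ] at this
  omega

lemma range_disjoint : Disjoint (Set.range emb1) (Set.range emb2) := by
  rw [Set.disjoint_left]
  rintro a ⟨p, rfl⟩ ⟨q, hq⟩
  rcases p with ⟨m, k, hk⟩
  rcases q with ⟨m', k', hk'⟩
  simp only [emb1, emb2] at hq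
  obtain ⟨h1, h2⟩ := Sigma.mk.inj_iff.mp hq
  have hm : m' + 1 = m := h1
  subst hm
  have h2 : (Fin.cons 1 (fun i : Fin m' => k' i + 2) : Fin (m' + 1) → ℕ)
      = fun i => k i + 1 := congrArg Subtype.val (eq_of_heq h2)
  have := congrFun h2 0
  simp only [Fin.cons_zero] at this
  have hb := hk.1 0
  omega

lemma range_cover : ∀ a : FIdx, a ∈ Set.range emb1 ∪ Set.range emb2 := by
  rintro ⟨m, k, hk⟩
  cases m with
  | zero =>
    left
    refine ⟨⟨0, ⟨fun i => i.elim0, ⟨fun i => i.elim0, fun i j _ => i.elim0⟩⟩⟩, ?_⟩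
    simp only [emb1]
    exact fidx_ext fun i => i.elim0
  | succ m' =>
    by_cases h1 : k 0 = 1
    · right
      have hb : ∀ i : Fin m', 3 ≤ k i.succ := by
        intro i
        have := fadm_mono hk ((i : ℕ) + 1) 0 i.succ (by simp)
        have := hk.1 0
        omega
      refine ⟨⟨m', ⟨fun i => k i.succ - 2,
        ⟨fun i => by show 1 ≤ k i.succ - 2; have := hb i; omega, ?_⟩⟩⟩, ?_⟩
      · intro i j h
        show k i.succ - 2 + 2 ≤ k j.succ - 2
        have hadj := hk.2 i.succ j.succ (by simp only [Fin.val_succ]; omega)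
        have := hb i
        omega
      · simp only [emb2]
        refine fidx_ext fun i => ?_
        induction i using Fin.cases with
        | zero => simp [Fin.cons_zero, h1.symm]
        | succ i' =>
          simp only [Fin.cons_succ]
          have := hb i'
          omega
    · left
      have hb : ∀ i : Fin (m' + 1), 2 ≤ k i := by
        intro i
        have := fadm_mono hk (i : ℕ) 0 i (by simp)
        have h0 := hk.1 0
        omega
      refine ⟨⟨m' + 1, ⟨fun i => k i - 1,
        ⟨fun i => by show 1 ≤ k i - 1; have := hb i; omega, ?_⟩⟩⟩, ?_⟩
      · intro i j h
        show k i - 1 + 2 ≤ k j - 1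
        have := hk.2 i j h
        have := hb i
        omega
      · simp only [emb1]
        refine fidx_ext fun i => ?_
        have := hb i
        omega

lemma range_isCompl : IsCompl (Set.range emb1) (Set.range emb2) :=
  ⟨range_disjoint, codisjoint_iff.mpr (top_unique fun a _ => range_cover a)⟩

lemma Fcal_rec (y : ℕ → ℂ) (n : ℕ) (hy : ∀ k, n < k → y k = 0) :
    Fcal y = Fcal (fun k => y (k + 1)) - y 1 * y 2 * Fcal (fun k => y (k + 2)) := by
  classical
  set f : FIdx → ℂ := fun p => (-1 : ℂ) ^ p.1 * ∏ i, y (p.2.1 i) * y (p.2.1 i + 1) with hfdef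
  set f1 : FIdx → ℂ :=
    fun p => (-1 : ℂ) ^ p.1 * ∏ i, y (p.2.1 i + 1) * y (p.2.1 i + 1 + 1) with hf1def
  set f2 : FIdx → ℂ :=
    fun p => (-1 : ℂ) ^ p.1 * ∏ i, y (p.2.1 i + 2) * y (p.2.1 i + 2 + 1) with hf2def
  have hs1 : Summable f1 := summable_F (fun k => y (k + 1)) n (fun k hk => hy _ (by omega))
  have hs2 : Summable f2 := summable_F (fun k => y (k + 2)) n (fun k hk => hy _ (by omega))
  have hA : HasSum (fun p => f (emb1 p)) (Fcal (fun k => y (k + 1))) := by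
    have he : (fun p => f (emb1 p)) = f1 := rfl
    rw [he]
    exact hs1.hasSum
  have hB : HasSum (fun p => f (emb2 p)) (-(y 1 * y 2) * Fcal (fun k => y (k + 2))) := by
    have he : (fun p => f (emb2 p)) = fun p => -(y 1 * y 2) * f2 p := by
      funext p
      rcases p with ⟨m, k, hk⟩
      simp only [hfdef, hf2def, emb2]
      rw [Fin.prod_univ_succ]
      simp only [Fin.cons_zero, Fin.cons_succ]
      rw [pow_succ]
      ring
    rw [he]
    exact (hs2.hasSum).mul_left _
  have h1' : HasSum (fun x : Set.range emb1 => f x) (Fcal (fun k => y (k + 1))) :=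
    (emb1_inj.hasSum_range_iff).mpr hA
  have h2' : HasSum (fun x : Set.range emb2 => f x)
      (-(y 1 * y 2) * Fcal (fun k => y (k + 2))) :=
    (emb2_inj.hasSum_range_iff).mpr hB
  have hF : HasSum f (Fcal (fun k => y (k + 1)) + -(y 1 * y 2) * Fcal (fun k => y (k + 2))) :=
    HasSum.add_isCompl range_isCompl h1' h2'
  have : Fcal y = Fcal (fun k => y (k + 1)) + -(y 1 * y 2) * Fcal (fun k => y (k + 2)) :=
    hF.tsum_eq
  rw [this]; ring

lemma Fcal_eq_one (y : ℕ → ℂ) (hy : ∀ k, 2 ≤ k → y k = 0) : Fcal y = 1 := by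
  classical
  set p0 : FIdx := ⟨0, ⟨fun i => i.elim0, ⟨fun i => i.elim0, fun i j _ => i.elim0⟩⟩⟩ with hp0
  have h0 : ∀ p : FIdx, p ≠ p0 →
      (-1 : ℂ) ^ p.1 * ∏ i, y (p.2.1 i) * y (p.2.1 i + 1) = 0 := by
    rintro ⟨m, k, hk⟩ hne
    cases m with
    | zero =>
      exact absurd (fidx_ext (h' := p0.2.2) fun i => i.elim0) hne
    | succ m' =>
      have hk0 : 2 ≤ k 0 + 1 := by have := hk.1 0; omega
      have : y (k 0) * y (k 0 + 1) = 0 := by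
        rw [hy _ hk0, mul_zero]
      exact mul_eq_zero_of_right _ (Finset.prod_eq_zero (Finset.mem_univ 0) this)
  have := tsum_eq_single (L := SummationFilter.unconditional _) (f := fun p : FIdx =>
    (-1 : ℂ) ^ p.1 * ∏ i, y (p.2.1 i) * y (p.2.1 i + 1)) p0 h0
  rw [Fcal, this]
  simp [hp0]

lemma FcalFin_zero (x : ℕ → ℂ) : FcalFin 0 x = 1 :=
  Fcal_eq_one _ (fun k hk => if_neg (by omega))

lemma FcalFin_one (x : ℕ → ℂ) : FcalFin 1 x = 1 :=
  Fcal_eq_one _ (fun k hk => if_neg (by omega))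

lemma FcalFin_rec (n : ℕ) (x : ℕ → ℂ) :
    FcalFin (n + 2) x
      = FcalFin (n + 1) (fun k => x (k + 1)) - x 1 * x 2 * FcalFin n (fun k => x (k + 2)) := by
  have h := Fcal_rec (fun k => if k ≤ n + 2 then x k else 0) (n + 2) (fun k hk => if_neg (by omega))
  have e1 : (fun k => (if k + 1 ≤ n + 2 then x (k + 1) else 0))
      = fun k => if k ≤ n + 1 then x (k + 1) else 0 := by
    funext k
    by_cases hL : k ≤ n + 1
    · rw [if_pos hL, if_pos (by omega)]
    · rw [if_neg hL, if_neg (by omega)]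
  have e2 : (fun k => (if k + 2 ≤ n + 2 then x (k + 2) else 0))
      = fun k => if k ≤ n then x (k + 2) else 0 := by
    funext k
    by_cases hL : k ≤ n
    · rw [if_pos hL, if_pos (by omega)]
    · rw [if_neg hL, if_neg (by omega)]
  simp only [e1, e2] at h
  rw [FcalFin, h, if_pos (by omega : (1:ℕ) ≤ n + 2), if_pos (by omega : (2:ℕ) ≤ n + 2)]
  rfl

lemma Fseg_sentinel (x : ℕ → ℂ) {a b : ℕ} (h : b + 1 < a) : Fseg x a b = 0 :=
  if_pos h

lemma Fseg_empty (x : ℕ → ℂ) {a b : ℕ} (h : b + 1 = a) : Fseg x a b = 1 := by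
  rw [Fseg, if_neg (by omega), show b + 1 - a = 0 by omega, FcalFin_zero]

lemma Fseg_self (x : ℕ → ℂ) (a : ℕ) : Fseg x a a = 1 := by
  rw [Fseg, if_neg (by omega), show a + 1 - a = 1 by omega, FcalFin_one]

lemma Fseg_rec (x : ℕ → ℂ) {a b : ℕ} (h : a ≤ b) :
    Fseg x a b = Fseg x (a + 1) b - x a * x (a + 1) * Fseg x (a + 2) b := by
  rcases eq_or_lt_of_le h with rfl | hlt
  · rw [Fseg_self, Fseg_empty x (by omega : a + 1 = a + 1), Fseg_sentinel x (by omega)]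
    ring
  · obtain ⟨m, hm⟩ : ∃ m, b + 1 - a = m + 2 := ⟨b - 1 - a, by omega⟩
    rw [Fseg, Fseg, Fseg, if_neg (by omega), if_neg (by omega), if_neg (by omega), hm,
      show b + 1 - (a + 1) = m + 1 by omega, show b + 1 - (a + 2) = m by omega,
      FcalFin_rec]
    have e1 : (fun k => x (k + 1 + a - 1)) = fun j => x (j + (a + 1) - 1) := by
      funext k; congr 1; omega
    have e2 : (fun k => x (k + 2 + a - 1)) = fun j => x (j + (a + 2) - 1) := by
      funext k; congr 1; omega
    rw [e1, e2, show 1 + a - 1 = a by omega, show 2 + a - 1 = a + 1 by omega]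

lemma Fseg_shift (x : ℕ → ℂ) {a : ℕ} (b : ℕ) (ha : 1 ≤ a) :
    Fseg x (a + 1) (b + 1) = Fseg (fun k => x (k + 1)) a b := by
  rw [Fseg, Fseg]
  rcases Nat.lt_or_ge (b + 1) a with h | h
  · rw [if_pos (by omega), if_pos (by omega)]
  · rw [if_neg (by omega), if_neg (by omega), show b + 1 + 1 - (a + 1) = b + 1 - a by omega]
    congr 1
    funext j
    congr 1
    omega

lemma prod_shift (x : ℕ → ℂ) (d : ℕ) :
    x 1 * x 2 * ∏ j ∈ Finset.Icc 1 d, (x (j + 1) * x (j + 1 + 1))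
      = ∏ j ∈ Finset.Icc 1 (d + 1), x j * x (j + 1) := by
  induction d with
  | zero => simp
  | succ d ih =>
    rw [Finset.prod_Icc_succ_top (by omega : 1 ≤ d + 1), ← mul_assoc, ih,
      Finset.prod_Icc_succ_top (by omega : 1 ≤ d + 2)]

lemma key_ident : ∀ (d : ℕ) (x : ℕ → ℂ) (s : ℕ),
    Fseg x 1 d * Fseg x 2 (d + s) - Fseg x 1 (d + s) * Fseg x 2 d
      = (∏ j ∈ Finset.Icc 1 d, x j * x (j + 1)) * Fseg x (d + 2) (d + s) := by
  intro d
  induction d with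
  | zero =>
    intro x s
    rw [Fseg_empty x (by omega : 0 + 1 = 1), Fseg_sentinel x (by omega : 0 + 1 < 2)]
    simp
  | succ d ih =>
    intro x s
    have h1 : Fseg x 1 (d + 1) = Fseg x 2 (d + 1) - x 1 * x 2 * Fseg x 3 (d + 1) :=
      Fseg_rec x (by omega)
    have h2 : Fseg x 1 (d + 1 + s) = Fseg x 2 (d + 1 + s) - x 1 * x 2 * Fseg x 3 (d + 1 + s) :=
      Fseg_rec x (by omega)
    have s1 : Fseg x 2 (d + 1) = Fseg (fun k => x (k + 1)) 1 d := Fseg_shift x d (by omega)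
    have s2 : Fseg x 3 (d + 1) = Fseg (fun k => x (k + 1)) 2 d := Fseg_shift x d (by omega)
    have s3 : Fseg x 2 (d + 1 + s) = Fseg (fun k => x (k + 1)) 1 (d + s) := by
      rw [show d + 1 + s = (d + s) + 1 by omega]; exact Fseg_shift x (d + s) (by omega)
    have s4 : Fseg x 3 (d + 1 + s) = Fseg (fun k => x (k + 1)) 2 (d + s) := by
      rw [show d + 1 + s = (d + s) + 1 by omega]; exact Fseg_shift x (d + s) (by omega)
    have s5 : Fseg x (d + 1 + 2) (d + 1 + s) = Fseg (fun k => x (k + 1)) (d + 2) (d + s) := by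
      rw [show d + 1 + 2 = (d + 2) + 1 by omega, show d + 1 + s = (d + s) + 1 by omega]
      exact Fseg_shift x (d + s) (by omega)
    have hIH := ih (fun k => x (k + 1)) s
    rw [h1, h2, s1, s2, s3, s4, s5]
    have : Fseg (fun k => x (k + 1)) 1 d * Fseg (fun k => x (k + 1)) 2 (d + s)
        - Fseg (fun k => x (k + 1)) 1 (d + s) * Fseg (fun k => x (k + 1)) 2 d
        = (∏ j ∈ Finset.Icc 1 d, x (j + 1) * x (j + 1 + 1))
            * Fseg (fun k => x (k + 1)) (d + 2) (d + s) := hIH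
    rw [← prod_shift]
    linear_combination x 1 * x 2 * this

/-- For any complex x₁,…,x_{d+s} :
𝔉(x₁,…,x_d) 𝔉(x₂,…,x_{d+s}) - 𝔉(x₁,…,x_{d+s}) 𝔉(x₂,…,x_d)
  = (∏_{j=1}^d x_j x_{j+1}) 𝔉(x_{d+2},…,x_{d+s}). -/
theorem stmt_4 (x : ℕ → ℂ) (d s : ℕ) :
    Fseg x 1 d * Fseg x 2 (d + s) - Fseg x 1 (d + s) * Fseg x 2 d
      = (∏ j ∈ Finset.Icc 1 d, x j * x (j + 1)) * Fseg x (d + 2) (d + s) := by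
  exact key_ident d x s
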